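/- Let a, b : ℕ → ℝ be the sequences defined by a 0 = 0, a 1 = 0, a 2 = −1, a k = −2·a (k−2) / (k·(k−1)·(k−2)) for k ≥ 3, and b 0 = 1, b 1 = −√π, b 2 = 3·(1−γ)/2 where γ is the Euler–Mascheroni constant, b k = −(2·b (k−2) + (3k² − 6k + 2)·a k) / (k·(k−1)·(k−2)) for k ≥ 3. Then for every k ≥ 1, b (2k+1) = (−2)^k · (−√π) / ((2k+1)! · (2k−1)!!), where (2k−1)!! denotes the double factorial of 2k−1. -/

import Mathlib

/-- The logarithmic coefficients `a k` in the series expansion of `2 J₁`. -/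
noncomputable def abramowitzA : ℕ → ℝ
  | 0 => 0
  | 1 => 0
  | 2 => -1
  | (k + 3) =>
      -2 * abramowitzA (k + 1) / (((k : ℝ) + 3) * ((k : ℝ) + 2) * ((k : ℝ) + 1))

/-- The coefficients `b k` in the series expansion of `2 J₁`. -/
noncomputable def abramowitzB : ℕ → ℝ
  | 0 => 1
  | 1 => -Real.sqrt Real.pi
  | 2 => 3 * (1 - Real.eulerMascheroniConstant) / 2
  | (k + 3) =>
      -(2 * abramowitzB (k + 1)
          + (3 * ((k : ℝ) + 3) ^ 2 - 6 * ((k : ℝ) + 3) + 2) * abramowitzA (k + 3))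
        / (((k : ℝ) + 3) * ((k : ℝ) + 2) * ((k : ℝ) + 1))

lemma abramowitzA_odd (k : ℕ) : abramowitzA (2 * k + 1) = 0 := by
  induction k with
  | zero => simp [abramowitzA]
  | succ n ih =>
      have : 2 * (n + 1) + 1 = (2 * n) + 3 := by ring
      rw [this, abramowitzA]
      have h : 2 * n + 1 = 2 * n + 1 := rfl
      rw [show (2 * n) + 1 = 2 * n + 1 from rfl] at ih
      simp [ih]

theorem abramowitzB_odd_formula (k : ℕ) (hk : 1 ≤ k) :
    abramowitzB (2 * k + 1) =
      (-2 : ℝ) ^ k * (-Real.sqrt Real.pi)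
        / ((Nat.factorial (2 * k + 1) : ℝ) * (Nat.doubleFactorial (2 * k - 1) : ℝ)) := by
  induction k with
  | zero => omega
  | succ n ih =>
      rcases Nat.eq_zero_or_pos n with hn | hn
      · subst hn
        show abramowitzB (0 + 3) = _
        rw [abramowitzB]
        have ha : abramowitzA (0 + 3) = abramowitzA (2 * 1 + 1) := by norm_num
        rw [ha, abramowitzA_odd]
        simp [abramowitzB, Nat.factorial, Nat.doubleFactorial]
        ring
      · have ih' := ih hn
        have hstep : 2 * (n + 1) + 1 = (2 * n - 1) + 3 + 1 := by omega
        have h2 : (2 * n - 1) + 1 + 1 = 2 * n + 1 := by omega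
        have hA : abramowitzA ((2 * n) + 3) = 0 := by
          have : (2 * n) + 3 = 2 * (n + 1) + 1 := by ring
          rw [this, abramowitzA_odd]
        show abramowitzB ((2 * n) + 3) = _
        rw [abramowitzB, hA, ih']
        have hfact : (Nat.factorial (2 * (n + 1) + 1) : ℝ) =
            ((2 * n : ℝ) + 3) * ((2 * n : ℝ) + 2) * (Nat.factorial (2 * n + 1) : ℝ) := by
          have : 2 * (n + 1) + 1 = (2 * n + 2) + 1 := by ring
          rw [this, Nat.factorial_succ, Nat.factorial_succ]
          push_cast
          ring
        have hdf : (Nat.doubleFactorial (2 * (n + 1) - 1) : ℝ) =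
            ((2 * n : ℝ) + 1) * (Nat.doubleFactorial (2 * n - 1) : ℝ) := by
          have h1 : 2 * (n + 1) - 1 = (2 * n - 1) + 2 := by omega
          rw [h1, Nat.doubleFactorial]
          have h3 : 2 * n - 1 + 2 = 2 * n + 1 := by omega
          push_cast [h3]
          ring
        rw [hfact, hdf]
        have hf : (Nat.factorial (2 * n + 1) : ℝ) ≠ 0 := by positivity
        have hd : (Nat.doubleFactorial (2 * n - 1) : ℝ) ≠ 0 := by
          exact_mod_cast Nat.cast_ne_zero.mpr (Nat.doubleFactorial_pos _).ne'
        have h1 : ((2 * n : ℝ) + 3) ≠ 0 := by positivity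
        have h2' : ((2 * n : ℝ) + 2) ≠ 0 := by positivity
        have h3 : ((2 * n : ℝ) + 1) ≠ 0 := by positivity
        field_simp
        push_cast
        ring
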